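/- Let E be a real inner product space, S ⊆ E a subset, K > 0, and ν : S → E a map with ‖ν(p)‖ = 1 for all p ∈ S. Assume that for all p, q ∈ S with p ≠ q one has 0 ≤ 2·⟨p − q, ν(p)⟩ ≤ K·‖p − q‖². Then for every p ∈ S and every real number t with 0 < |t| < 1/K, the point x = p + t·ν(p) satisfies ‖x − q‖ > |t| for every q ∈ S with q ≠ p; in particular, p is the unique nearest point of S to x, and the distance from x to S equals |t|. -/

import Mathlib

/-- Unique nearest-point (foot point) property on the tubular neighborhood S_{1/K}
under the two-sided ball curvature bound 0 ≤ Z̲_S ≤ Z̄_S ≤ K. -/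
theorem stmt_8 {E : Type*} [NormedAddCommGroup E] [InnerProductSpace ℝ E]
    (S : Set E) (K : ℝ) (hK : 0 < K) (ν : E → E)
    (hν : ∀ p ∈ S, ‖ν p‖ = 1)
    (hZ : ∀ p ∈ S, ∀ q ∈ S, p ≠ q →
      0 ≤ 2 * (inner ℝ (p - q) (ν p) : ℝ) ∧
      2 * (inner ℝ (p - q) (ν p) : ℝ) ≤ K * ‖p - q‖ ^ 2)
    (p : E) (hp : p ∈ S) (t : ℝ) (ht0 : 0 < |t|) (ht : |t| < 1 / K) :
    (∀ q ∈ S, q ≠ p → |t| < ‖(p + t • ν p) - q‖) ∧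
    (∀ q ∈ S, dist (p + t • ν p) q = |t| → q = p) ∧
    Metric.infDist (p + t • ν p) S = |t| := by
  have hdistp : dist (p + t • ν p) p = |t| := by
    rw [dist_eq_norm]
    simp [norm_smul, hν p hp, abs_eq, Real.norm_eq_abs]
  have key : ∀ q ∈ S, q ≠ p → |t| < ‖(p + t • ν p) - q‖ := by
    intro q hq hqp
    have hpq : p ≠ q := fun h => hqp h.symm
    obtain ⟨h1, h2⟩ := hZ p hp q hq hpq
    have hr : 0 < ‖p - q‖ ^ 2 := by
      have h0 : ‖p - q‖ ≠ 0 := by simpa using sub_ne_zero.mpr hpq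
      positivity
    have hrw : (p + t • ν p) - q = (p - q) + t • ν p := by abel
    have hsq : ‖(p + t • ν p) - q‖ ^ 2
        = ‖p - q‖ ^ 2 + 2 * (t * (inner ℝ (p - q) (ν p) : ℝ)) + t ^ 2 := by
      rw [hrw, @norm_add_sq_real, real_inner_smul_right, norm_smul]
      have := hν p hp
      rw [this]
      simp [mul_pow, sq_abs, Real.norm_eq_abs]
    have habs : |t| * K < 1 := (lt_div_iff₀ hK).mp ht
    have htK : t * K > -1 ∧ t * K < 1 := by
      have : |t * K| < 1 := by rwa [abs_mul, abs_of_pos hK]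
      exact ⟨(abs_lt.mp this).1, (abs_lt.mp this).2⟩
    have hpos : t ^ 2 < ‖(p + t • ν p) - q‖ ^ 2 := by
      rw [hsq]
      rcases le_or_gt 0 t with h | h
      · nlinarith
      · nlinarith [mul_le_mul_of_nonpos_left h2 h.le]
    have := lt_of_pow_lt_pow_left₀ 2 (norm_nonneg _) (by rwa [sq_abs] : |t| ^ 2 < ‖(p + t • ν p) - q‖ ^ 2)
    exact this
  refine ⟨key, ?_, ?_⟩
  · intro q hq hdq
    by_contra hqp
    have := key q hq hqp
    rw [dist_eq_norm] at hdq
    linarith [this.trans_eq hdq |>.false]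
  · apply le_antisymm
    · calc Metric.infDist (p + t • ν p) S ≤ dist (p + t • ν p) p := Metric.infDist_le_dist_of_mem hp
        _ = |t| := hdistp
    · by_contra hlt
      push_neg at hlt
      obtain ⟨q, hq, hdq⟩ := (Metric.infDist_lt_iff ⟨p, hp⟩).mp hlt
      rcases eq_or_ne q p with rfl | hqp
      · exact absurd hdistp (ne_of_lt hdq)
      · rw [dist_eq_norm] at hdq
        exact absurd hdq (not_lt.mpr (key q hq hqp).le)
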